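/- Let S = {v ∈ EuclideanSpace ℂ (Fin 2) : ‖v 0‖ = ‖v 1‖} (this is the description, in the standard affine coordinate chart of ℂP² centered at the point [0,0,1], of the set M = {[z₀,z₁,z₂] ∈ ℂP² : |z₀| = |z₁|}). Then S is not the graph of a Lipschitz function in any neighborhood of the origin; precisely: there do not exist a neighborhood U of 0 in EuclideanSpace ℂ (Fin 2), a real-linear isometric equivalence L : EuclideanSpace ℂ (Fin 2) ≃ EuclideanSpace ℝ (Fin 4) (an orthogonal change of real coordinates identifying ℂ² with ℝ⁴ = ℝ³ × ℝ), and a Lipschitz function ψ : EuclideanSpace ℝ (Fin 3) → ℝ such that S ∩ U = {p ∈ U : (L p) 3 = ψ (x(p))}, where x(p) ∈ EuclideanSpace ℝ (Fin 3) denotes the first three coordinates (L p) 0, (L p) 1, (L p) 2 of L p. -/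

import Mathlib

open Complex

/-- The set `S = {v ∈ ℂ² : |v 0| = |v 1|}` (the affine-chart picture of the
nonsmooth Levi-flat hypersurface `M = {[z₀,z₁,z₂] ∈ ℂP² : |z₀| = |z₁|}` near
`[0,0,1]`) is not the graph of a Lipschitz function in any neighborhood of the
origin, after any orthogonal real-linear identification of `ℂ²` with `ℝ⁴ = ℝ³ × ℝ`. -/
theorem not_lipschitz_graph_near_origin :
    ¬ ∃ (U : Set (EuclideanSpace ℂ (Fin 2))), U ∈ nhds (0 : EuclideanSpace ℂ (Fin 2)) ∧
      ∃ (L : EuclideanSpace ℂ (Fin 2) ≃ₗᵢ[ℝ] EuclideanSpace ℝ (Fin 4))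
        (ψ : EuclideanSpace ℝ (Fin 3) → ℝ) (K : NNReal),
        LipschitzWith K ψ ∧
        {v : EuclideanSpace ℂ (Fin 2) | ‖v 0‖ = ‖v 1‖} ∩ U =
          {p ∈ U | L p 3 = ψ (WithLp.toLp 2 (fun i : Fin 3 => L p i.castSucc) : EuclideanSpace ℝ (Fin 3))} := by
  rintro ⟨U, hU, L, ψ, K, hLip, hEq⟩
  obtain ⟨ε, hε, hball⟩ := Metric.mem_nhds_iff.1 hU
  set e : EuclideanSpace ℂ (Fin 2) := L.symm (EuclideanSpace.single 3 1) with he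
  have hLe : L e = EuclideanSpace.single 3 1 := L.apply_symm_apply _
  have hnorme : ‖e‖ = 1 := by
    rw [he, L.symm.norm_map, EuclideanSpace.norm_single, norm_one]
  set t := ε / 2 with ht
  have ht0 : 0 < t := by positivity
  have htε : t < ε := by simp [ht]; linarith
  have hx0 : (WithLp.toLp 2 (fun i : Fin 3 => (L (0 : EuclideanSpace ℂ (Fin 2))) i.castSucc) :
      EuclideanSpace ℝ (Fin 3)) = 0 := by
    ext i; simp
  have hψ0 : ψ (0 : EuclideanSpace ℝ (Fin 3)) = 0 := by
    have h0 : (0 : EuclideanSpace ℂ (Fin 2)) ∈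
        {v : EuclideanSpace ℂ (Fin 2) | ‖v 0‖ = ‖v 1‖} ∩ U := by
      constructor
      · simp [Set.mem_setOf_eq]
      · exact mem_of_mem_nhds hU
    rw [hEq] at h0
    have := h0.2
    rw [hx0] at this
    simpa using this.symm
  -- value of the graph defect on real multiples of e
  have hg_smul : ∀ s : ℝ, L (s • e) 3 -
      ψ (WithLp.toLp 2 (fun i : Fin 3 => (L (s • e)) i.castSucc) : EuclideanSpace ℝ (Fin 3)) = s := by
    intro s
    have hL : L (s • e) = s • EuclideanSpace.single 3 1 := by
      rw [L.map_smul, hLe]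
    have h3 : L (s • e) 3 = s := by
      rw [hL]; simp [EuclideanSpace.single_apply]
    have hx : (WithLp.toLp 2 (fun i : Fin 3 => (L (s • e)) i.castSucc) : EuclideanSpace ℝ (Fin 3)) = 0 := by
      ext i
      rw [hL]
      have hi : (i.castSucc : Fin 4) ≠ 3 := by
        have := i.castSucc_lt_last
        simp [Fin.ext_iff] at this ⊢
        omega
      simp [EuclideanSpace.single_apply, hi]
    rw [h3, hx, hψ0, sub_zero]
  -- e is not in S
  have hne : ‖e 0‖ ≠ ‖e 1‖ := by
    intro hcon
    have hmem : t • e ∈ {v : EuclideanSpace ℂ (Fin 2) | ‖v 0‖ = ‖v 1‖} ∩ U := by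
      constructor
      · show ‖(t • e) 0‖ = ‖(t • e) 1‖
        have h0 : (t • e) 0 = (t : ℝ) • e 0 := rfl
        have h1 : (t • e) 1 = (t : ℝ) • e 1 := rfl
        rw [h0, h1, norm_smul, norm_smul, hcon]
      · apply hball
        rw [Metric.mem_ball, dist_zero_right, norm_smul, hnorme, mul_one,
          Real.norm_eq_abs, abs_of_pos ht0]
        exact htε
    rw [hEq] at hmem
    have h := hg_smul t
    rw [hmem.2, sub_self] at h
    exact ht0.ne h
  -- the circle path
  set γ : ℝ → EuclideanSpace ℂ (Fin 2) :=
    fun θ => ((t : ℂ) * Complex.exp (θ * I)) • e with hγ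
  have hγnorm : ∀ θ : ℝ, ‖γ θ‖ = t := by
    intro θ
    rw [hγ]
    simp only [norm_smul, hnorme, mul_one]
    rw [norm_mul]
    simp [Complex.norm_exp_ofReal_mul_I, abs_of_pos ht0]
  have hγU : ∀ θ : ℝ, γ θ ∈ U := fun θ => hball (by
    rw [Metric.mem_ball, dist_zero_right, hγnorm θ]; exact htε)
  have hγS : ∀ θ : ℝ, γ θ ∉ {v : EuclideanSpace ℂ (Fin 2) | ‖v 0‖ = ‖v 1‖} := by
    intro θ hconv
    apply hne
    have h0 : γ θ 0 = ((t : ℂ) * Complex.exp (θ * I)) • e 0 := rfl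
    have h1 : γ θ 1 = ((t : ℂ) * Complex.exp (θ * I)) • e 1 := rfl
    have hc : ‖((t : ℂ) * Complex.exp (θ * I))‖ = t := by
      rw [norm_mul]
      simp [Complex.norm_exp_ofReal_mul_I, abs_of_pos ht0]
    have := hconv
    rw [Set.mem_setOf_eq, h0, h1, norm_smul, norm_smul, hc] at this
    exact mul_left_cancel₀ ht0.ne' this
  -- g along γ never vanishes
  set g : EuclideanSpace ℂ (Fin 2) → ℝ := fun p =>
    L p 3 - ψ (WithLp.toLp 2 (fun i : Fin 3 => L p i.castSucc) : EuclideanSpace ℝ (Fin 3)) with hg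
  have hγg : ∀ θ : ℝ, g (γ θ) ≠ 0 := by
    intro θ h0
    apply hγS θ
    have hmem : γ θ ∈ {p ∈ U | L p 3 =
        ψ (WithLp.toLp 2 (fun i : Fin 3 => L p i.castSucc) : EuclideanSpace ℝ (Fin 3))} :=
      ⟨hγU θ, by have := sub_eq_zero.mp h0; exact this⟩
    rw [← hEq] at hmem
    exact hmem.1
  -- endpoint values
  have hγ0 : γ 0 = t • e := by
    rw [hγ]
    simp only [Complex.ofReal_zero, zero_mul, Complex.exp_zero, mul_one]
    rw [show ((t : ℂ) • e) = t • e from (Complex.coe_smul ..)]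
  have hγπ : γ Real.pi = (-t : ℝ) • e := by
    rw [hγ]
    simp only [Complex.exp_pi_mul_I]
    rw [mul_neg_one, ← Complex.ofReal_neg, Complex.coe_smul]
  have hg0 : g (γ 0) = t := by rw [hγ0]; exact hg_smul t
  have hgπ : g (γ Real.pi) = -t := by rw [hγπ]; exact hg_smul (-t)
  -- continuity of g ∘ γ
  have hγcont : Continuous γ := by
    apply Continuous.smul (f := fun θ : ℝ => (t : ℂ) * Complex.exp (θ * I)) (g := fun _ => e) _ continuous_const
    exact continuous_const.mul (Complex.continuous_exp.comp
      (Complex.continuous_ofReal.mul continuous_const))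
  have hxcont : Continuous fun p : EuclideanSpace ℂ (Fin 2) =>
      (WithLp.toLp 2 (fun i : Fin 3 => L p i.castSucc) : EuclideanSpace ℝ (Fin 3)) := by
    exact (PiLp.continuous_toLp 2 fun _ : Fin 3 => ℝ).comp
      (continuous_pi fun i => (continuous_apply _).comp ((PiLp.continuous_ofLp 2 _).comp L.continuous))
  have hgcont : Continuous g := by
    exact ((continuous_apply _).comp ((PiLp.continuous_ofLp 2 _).comp L.continuous)).sub (hLip.continuous.comp hxcont)
  -- IVT
  have hmem0 : (0 : ℝ) ∈ Set.Icc (g (γ Real.pi)) (g (γ 0)) := by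
    rw [hg0, hgπ]; constructor <;> linarith
  obtain ⟨θ, _, hθ⟩ := intermediate_value_Icc' Real.pi_pos.le
    ((hgcont.comp hγcont).continuousOn) hmem0
  exact hγg θ hθ
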